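/- Let X₁, …, X_N be independent discrete random variables and f(x₁,…,x_N) = argmin index of the maximum (any selection of an index attaining max_n x_n). Then for each n, the characteristic graph G_n of f at coordinate n satisfies: if {x, y} is a non-edge of G_n with x ≠ y, then for every other value z in the support, both {x, z} and {y, z} are edges of G_n. -/

import Mathlib

/-- For the argmax selection function `f` on `N ≥ 2` i.i.d. variables on a
finite totally ordered full support `S`, if `{x, y}` (with `x ≠ y`) is a non-edge of the
characteristic graph `G_n` at coordinate `n`, then for every other value `z`, both
`{x, z}` and `{y, z}` are edges of `G_n`. -/
theorem stmt13 {N : ℕ} (hN : 2 ≤ N) {S : Type*} [Fintype S] [LinearOrder S]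
    (f : (Fin N → S) → Fin N) (hf : ∀ (v : Fin N → S) (n : Fin N), v n ≤ v (f v))
    (Edge : Fin N → S → S → Prop)
    (hEdge : ∀ m x y, Edge m x y ↔ ∃ s : Fin N → S,
      f (Function.update s m x) ≠ f (Function.update s m y))
    (n : Fin N) (x y : S) (hxy : x ≠ y) (hne : ¬ Edge n x y) :
    ∀ z : S, z ≠ x → z ≠ y → Edge n x z ∧ Edge n y z := by
  obtain ⟨m, hm⟩ : ∃ m : Fin N, m ≠ n := by
    have hcard : 1 < Fintype.card (Fin N) := by rw [Fintype.card_fin]; omega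
    exact Fintype.exists_ne_of_one_lt_card hcard n
  -- If the coordinate-n value is below the constant background, f ≠ n
  have hlo : ∀ (c a : S), a < c → f (Function.update (fun _ => c) n a) ≠ n := by
    intro c a hac hfn
    have h1 := hf (Function.update (fun _ => c) n a) m
    rw [hfn, Function.update_self, Function.update_of_ne hm] at h1
    exact absurd h1 (not_le.mpr hac)
  -- If the coordinate-n value is above the constant background, f = n
  have hhi : ∀ (c a : S), c < a → f (Function.update (fun _ => c) n a) = n := by
    intro c a hca
    by_contra hfn
    have h1 := hf (Function.update (fun _ => c) n a) n
    rw [Function.update_self, Function.update_of_ne hfn] at h1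
    exact absurd h1 (not_le.mpr hca)
  have hne' : ∀ s : Fin N → S,
      f (Function.update s n x) = f (Function.update s n y) := by
    rw [hEdge] at hne; push_neg at hne; exact hne
  have key : ∀ a b : S, a < b →
      (∀ s : Fin N → S, f (Function.update s n a) = f (Function.update s n b)) →
      ∀ z : S, z ≠ a → z ≠ b → Edge n a z ∧ Edge n b z := by
    intro a b hab hnab z hza hzb
    rcases lt_trichotomy z a with hz | hz | hz
    · -- z < a < b : constant-a background
      have hfa : f (Function.update (fun _ => a) n a) = n :=
        (hnab (fun _ => a)).trans (hhi a b hab)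
      have hfz : f (Function.update (fun _ => a) n z) ≠ n := hlo a z hz
      constructor
      · exact (hEdge n a z).mpr ⟨fun _ => a, by rw [hfa]; exact fun h => hfz h.symm⟩
      · exact (hEdge n b z).mpr ⟨fun _ => a, by
          rw [(hnab (fun _ => a)).symm, hfa]; exact fun h => hfz h.symm⟩
    · exact absurd hz hza
    · rcases lt_trichotomy z b with hz' | hz' | hz'
      · -- a < z < b : contradiction with non-edge, constant-z background
        have h1 := hnab (fun _ => z)
        rw [hhi z b hz'] at h1
        exact absurd h1 (hlo z a hz)
      · exact absurd hz' hzb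
      · -- b < z : constant-b background
        have hfz : f (Function.update (fun _ => b) n z) = n := hhi b z hz'
        have hfa : f (Function.update (fun _ => b) n a) ≠ n := hlo b a hab
        have hfb : f (Function.update (fun _ => b) n b) ≠ n := by
          rw [← hnab (fun _ => b)]; exact hfa
        constructor
        · exact (hEdge n a z).mpr ⟨fun _ => b, by rw [hfz]; exact hfa⟩
        · exact (hEdge n b z).mpr ⟨fun _ => b, by rw [hfz]; exact hfb⟩
  rcases hxy.lt_or_gt with h | h
  · exact fun z hzx hzy => key x y h hne' z hzx hzy
  · intro z hzx hzy
    have := key y x h (fun s => (hne' s).symm) z hzy hzx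
    exact ⟨this.2, this.1⟩
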